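/- Let M be a triangulated category that is a module over a tensor triangulated category (K,⊗,1), and let c : SMod(M) → SMod(M) be an operator that is extensive, order-preserving and of finite type. Then for every N ∈ SMod^c(M), the function f : SMod^c(M) → SMod^c(M), N' ↦ c^∞(N + N'), is continuous. Consequently, the spectral space SMod^c(M) equipped with the operation (N, N') ↦ c^∞(N + N') is a topological monoid. -/

import Mathlib

open CategoryTheory CategoryTheory.Limits CategoryTheory.Pretriangulated
open CategoryTheory.MonoidalCategory ZeroObject

universe v u v' u'

/-- The data of the action of a tensor triangulated category `(K,⊗,1)` on a triangulated
category `M`, recorded on objects together with the unit and shift coherences that we use. -/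
structure TTModuleStr (K : Type u) [Category.{v} K] [MonoidalCategory K] [HasShift K ℤ]
    (M : Type u') [Category.{v'} M] [HasShift M ℤ] where
  act : K → M → M
  act_unit : ∀ m : M, Nonempty (act (𝟙_ K) m ≅ m)
  act_unit_shift : ∀ m : M, Nonempty (act ((𝟙_ K)⟦(1 : ℤ)⟧) m ≅ m⟦(1 : ℤ)⟧)
  act_unit_shift_neg : ∀ m : M, Nonempty (act ((𝟙_ K)⟦(-1 : ℤ)⟧) m ≅ m⟦(-1 : ℤ)⟧)

variable {K : Type u} [Category.{v} K] [MonoidalCategory K] [HasZeroObject K] [Preadditive K]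
  [HasShift K ℤ] [∀ n : ℤ, (shiftFunctor K n).Additive] [Pretriangulated K]
variable {M : Type u'} [Category.{v'} M] [HasZeroObject M] [Preadditive M] [HasShift M ℤ]
  [∀ n : ℤ, (shiftFunctor M n).Additive] [Pretriangulated M] [HasBinaryBiproducts M]

/-- A thick `K`-submodule of `M`. -/
structure ThickSubmodule (A : TTModuleStr K M) where
  carrier : Set M
  zero_mem : (0 : M) ∈ carrier
  act_mem : ∀ (a : K) (m : M), m ∈ carrier → A.act a m ∈ carrier
  biprod_mem_iff : ∀ m m' : M, (m ⊞ m') ∈ carrier ↔ (m ∈ carrier ∧ m' ∈ carrier)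
  mem₃_of_dist : ∀ T : Triangle M, T ∈ (distTriang M) →
    T.obj₁ ∈ carrier → T.obj₂ ∈ carrier → T.obj₃ ∈ carrier
  mem₁_of_dist : ∀ T : Triangle M, T ∈ (distTriang M) →
    T.obj₂ ∈ carrier → T.obj₃ ∈ carrier → T.obj₁ ∈ carrier
  mem₂_of_dist : ∀ T : Triangle M, T ∈ (distTriang M) →
    T.obj₁ ∈ carrier → T.obj₃ ∈ carrier → T.obj₂ ∈ carrier

variable (A : TTModuleStr K M)

instance : SetLike (ThickSubmodule A) M where
  coe N := N.carrier
  coe_injective := by intro N N' h; cases N; cases N'; congr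

/-- `U(m) = { N ∈ SMod(M) | m ∈ N }`. -/
def U (m : M) : Set (ThickSubmodule A) := {N : ThickSubmodule A | m ∈ N.carrier}

/-- The topology on `SMod(M)` generated by the subbasis `{U(m)}_{m ∈ M}`. -/
instance : TopologicalSpace (ThickSubmodule A) :=
  TopologicalSpace.generateFrom (Set.range (U A))

/-- The thick `K`-submodule of `M` generated by a set `X` of objects of `M`. -/
def genSub (X : Set M) : ThickSubmodule A where
  carrier := ⋂ (N : ThickSubmodule A) (_ : X ⊆ N.carrier), N.carrier
  zero_mem := by
    simp only [Set.mem_iInter]; intro N _; exact N.zero_mem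
  act_mem := by
    intro a m hm
    simp only [Set.mem_iInter] at hm ⊢
    intro N hN
    exact N.act_mem a m (hm N hN)
  biprod_mem_iff := by
    intro m m'
    simp only [Set.mem_iInter]
    constructor
    · intro h
      exact ⟨fun N hN => ((N.biprod_mem_iff m m').1 (h N hN)).1,
        fun N hN => ((N.biprod_mem_iff m m').1 (h N hN)).2⟩
    · rintro ⟨h1, h2⟩ N hN
      exact (N.biprod_mem_iff m m').2 ⟨h1 N hN, h2 N hN⟩
  mem₃_of_dist := by
    intro T hT h1 h2
    simp only [Set.mem_iInter] at h1 h2 ⊢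
    intro N hN
    exact N.mem₃_of_dist T hT (h1 N hN) (h2 N hN)
  mem₁_of_dist := by
    intro T hT h1 h2
    simp only [Set.mem_iInter] at h1 h2 ⊢
    intro N hN
    exact N.mem₁_of_dist T hT (h1 N hN) (h2 N hN)
  mem₂_of_dist := by
    intro T hT h1 h2
    simp only [Set.mem_iInter] at h1 h2 ⊢
    intro N hN
    exact N.mem₂_of_dist T hT (h1 N hN) (h2 N hN)

/-- The largest thick `K`-submodule: all of `M`. -/
def topSub : ThickSubmodule A where
  carrier := Set.univ
  zero_mem := trivial
  act_mem := fun _ _ _ => trivial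
  biprod_mem_iff := fun _ _ => by simp
  mem₃_of_dist := fun _ _ _ _ => trivial
  mem₁_of_dist := fun _ _ _ _ => trivial
  mem₂_of_dist := fun _ _ _ _ => trivial

/-- An operator on `SMod(M)` is extensive if `N ⊆ c(N)` for all `N`. -/
def Extensive (c : ThickSubmodule A → ThickSubmodule A) : Prop :=
  ∀ N : ThickSubmodule A, N.carrier ⊆ (c N).carrier

/-- An operator on `SMod(M)` is order-preserving if `N ⊆ N'` implies `c(N) ⊆ c(N')`. -/
def OrderPreserving (c : ThickSubmodule A → ThickSubmodule A) : Prop :=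
  ∀ N N' : ThickSubmodule A, N.carrier ⊆ N'.carrier → (c N).carrier ⊆ (c N').carrier

/-- An operator on `SMod(M)` is idempotent if `c(c(N)) = c(N)` for all `N`. -/
def Idempotent (c : ThickSubmodule A → ThickSubmodule A) : Prop :=
  ∀ N : ThickSubmodule A, c (c N) = c N

/-- An operator on `SMod(M)` is of finite type if `c(N) = ⋃_{n ∈ N} c(K(n))`. -/
def FiniteType (c : ThickSubmodule A → ThickSubmodule A) : Prop :=
  ∀ N : ThickSubmodule A,
    (c N).carrier = ⋃ n ∈ N.carrier, (c (genSub A {n})).carrier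

/-- A topological space is spectral if it is quasi-compact, `T0`, sober, and its
quasi-compact open subsets form a basis that is closed under finite intersections. -/
def IsSpectralSpace (X : Type*) [TopologicalSpace X] : Prop :=
  CompactSpace X ∧ T0Space X ∧ QuasiSober X ∧
    TopologicalSpace.IsTopologicalBasis {s : Set X | IsOpen s ∧ IsCompact s} ∧
    ∀ s t : Set X, IsOpen s → IsCompact s → IsOpen t → IsCompact t → IsCompact (s ∩ t)



/-! ### Auxiliary lemmas -/

lemma ts_ext {N N' : ThickSubmodule A} (h : N.carrier = N'.carrier) : N = N' := by
  cases N; cases N'; cases h; rfl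

lemma mem_genSub_iff {X : Set M} {m : M} :
    m ∈ (genSub A X).carrier ↔ ∀ N : ThickSubmodule A, X ⊆ N.carrier → m ∈ N.carrier := by
  simp [genSub]

lemma subset_genSub (X : Set M) : X ⊆ (genSub A X).carrier :=
  fun _ hx => (mem_genSub_iff A).2 fun _ hN => hN hx

lemma genSub_le {X : Set M} {N : ThickSubmodule A} (h : X ⊆ N.carrier) :
    (genSub A X).carrier ⊆ N.carrier :=
  fun _ hm => (mem_genSub_iff A).1 hm N h

lemma genSub_mono {X Y : Set M} (h : X ⊆ Y) :
    (genSub A X).carrier ⊆ (genSub A Y).carrier :=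
  genSub_le A (h.trans (subset_genSub A Y))

/-- Directed union of thick submodules. -/
def dirUnion {ι : Type*} [Nonempty ι] (F : ι → ThickSubmodule A)
    (hdir : ∀ i j, ∃ k, (F i).carrier ⊆ (F k).carrier ∧ (F j).carrier ⊆ (F k).carrier) :
    ThickSubmodule A where
  carrier := ⋃ i, (F i).carrier
  zero_mem := Set.mem_iUnion.2 ⟨Classical.arbitrary ι, (F _).zero_mem⟩
  act_mem := fun a m hm => by
    obtain ⟨i, hi⟩ := Set.mem_iUnion.1 hm
    exact Set.mem_iUnion.2 ⟨i, (F i).act_mem a m hi⟩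
  biprod_mem_iff := fun m m' => by
    constructor
    · intro h
      obtain ⟨i, hi⟩ := Set.mem_iUnion.1 h
      obtain ⟨h1, h2⟩ := ((F i).biprod_mem_iff m m').1 hi
      exact ⟨Set.mem_iUnion.2 ⟨i, h1⟩, Set.mem_iUnion.2 ⟨i, h2⟩⟩
    · rintro ⟨h1, h2⟩
      obtain ⟨i, hi⟩ := Set.mem_iUnion.1 h1
      obtain ⟨j, hj⟩ := Set.mem_iUnion.1 h2
      obtain ⟨k, hik, hjk⟩ := hdir i j
      exact Set.mem_iUnion.2 ⟨k, ((F k).biprod_mem_iff m m').2 ⟨hik hi, hjk hj⟩⟩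
  mem₃_of_dist := fun T hT h1 h2 => by
    obtain ⟨i, hi⟩ := Set.mem_iUnion.1 h1
    obtain ⟨j, hj⟩ := Set.mem_iUnion.1 h2
    obtain ⟨k, hik, hjk⟩ := hdir i j
    exact Set.mem_iUnion.2 ⟨k, (F k).mem₃_of_dist T hT (hik hi) (hjk hj)⟩
  mem₁_of_dist := fun T hT h1 h2 => by
    obtain ⟨i, hi⟩ := Set.mem_iUnion.1 h1
    obtain ⟨j, hj⟩ := Set.mem_iUnion.1 h2
    obtain ⟨k, hik, hjk⟩ := hdir i j
    exact Set.mem_iUnion.2 ⟨k, (F k).mem₁_of_dist T hT (hik hi) (hjk hj)⟩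
  mem₂_of_dist := fun T hT h1 h2 => by
    obtain ⟨i, hi⟩ := Set.mem_iUnion.1 h1
    obtain ⟨j, hj⟩ := Set.mem_iUnion.1 h2
    obtain ⟨k, hik, hjk⟩ := hdir i j
    exact Set.mem_iUnion.2 ⟨k, (F k).mem₂_of_dist T hT (hik hi) (hjk hj)⟩

lemma mem_genSub_finite (X : Set M) (m : M) (h : m ∈ (genSub A X).carrier) :
    ∃ s : Finset M, ↑s ⊆ X ∧ m ∈ (genSub A (↑s : Set M)).carrier := by
  classical
  have : Nonempty {s : Finset M // ↑s ⊆ X} := ⟨⟨∅, by simp⟩⟩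
  let D : ThickSubmodule A := dirUnion A
    (fun s : {s : Finset M // ↑s ⊆ X} => genSub A (↑s.1 : Set M))
    (fun i j => ⟨⟨i.1 ∪ j.1, by
        push_cast
        exact Set.union_subset i.2 j.2⟩,
      genSub_mono A (by push_cast; exact Set.subset_union_left),
      genSub_mono A (by push_cast; exact Set.subset_union_right)⟩)
  have hXD : X ⊆ D.carrier := by
    intro x hx
    exact Set.mem_iUnion.2 ⟨⟨{x}, by simpa using hx⟩,
      subset_genSub A _ (by simp)⟩
  obtain ⟨s, hs⟩ := Set.mem_iUnion.1 (genSub_le A hXD h)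
  exact ⟨s.1, s.2, hs⟩

section Closure

variable (c : ThickSubmodule A → ThickSubmodule A)

lemma citer_le (hext : Extensive A c) {i j : ℕ} (h : i ≤ j) (N : ThickSubmodule A) :
    (c^[i] N).carrier ⊆ (c^[j] N).carrier := by
  induction j with
  | zero => obtain rfl : i = 0 := Nat.le_zero.1 h; exact subset_rfl
  | succ j ih =>
    rcases Nat.lt_or_ge i (j + 1) with hlt | hge
    · rw [Function.iterate_succ_apply']
      exact (ih (Nat.lt_succ_iff.1 hlt)).trans (hext _)
    · obtain rfl : i = j + 1 := le_antisymm h hge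
      exact subset_rfl

lemma citer_mono (hord : OrderPreserving A c) {N N' : ThickSubmodule A}
    (h : N.carrier ⊆ N'.carrier) (i : ℕ) : (c^[i] N).carrier ⊆ (c^[i] N').carrier := by
  induction i with
  | zero => exact h
  | succ i ih =>
    rw [Function.iterate_succ_apply', Function.iterate_succ_apply']
    exact hord _ _ ih

lemma citer_le_fixed (hord : OrderPreserving A c) {N L : ThickSubmodule A}
    (hL : c L = L) (h : N.carrier ⊆ L.carrier) (i : ℕ) :
    (c^[i] N).carrier ⊆ L.carrier := by
  induction i with
  | zero => exact h
  | succ i ih =>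
    rw [Function.iterate_succ_apply']
    exact (hord _ _ ih).trans (by rw [hL])

/-- `c^∞(N) = ⋃ i, c^i(N)`. -/
def cInfty (hext : Extensive A c) (N : ThickSubmodule A) : ThickSubmodule A :=
  dirUnion A (fun i => c^[i] N)
    (fun i j => ⟨max i j, citer_le A c hext (le_max_left i j) N,
      citer_le A c hext (le_max_right i j) N⟩)

lemma cInfty_carrier (hext : Extensive A c) (N : ThickSubmodule A) :
    (cInfty A c hext N).carrier = ⋃ i, (c^[i] N).carrier := rfl

lemma le_cInfty (hext : Extensive A c) (N : ThickSubmodule A) :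
    N.carrier ⊆ (cInfty A c hext N).carrier := by
  intro x hx
  exact Set.mem_iUnion.2 ⟨0, hx⟩

lemma cInfty_le_fixed (hext : Extensive A c) (hord : OrderPreserving A c)
    {N L : ThickSubmodule A} (hL : c L = L) (h : N.carrier ⊆ L.carrier) :
    (cInfty A c hext N).carrier ⊆ L.carrier :=
  Set.iUnion_subset fun i => citer_le_fixed A c hord hL h i

lemma cInfty_mono (hext : Extensive A c) (hord : OrderPreserving A c)
    {N N' : ThickSubmodule A} (h : N.carrier ⊆ N'.carrier) :
    (cInfty A c hext N).carrier ⊆ (cInfty A c hext N').carrier :=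
  Set.iUnion_subset fun i =>
    (citer_mono A c hord h i).trans (Set.subset_iUnion (fun j => (c^[j] N').carrier) i)

lemma c_cInfty (hext : Extensive A c) (hord : OrderPreserving A c) (hft : FiniteType A c)
    (N : ThickSubmodule A) : c (cInfty A c hext N) = cInfty A c hext N := by
  apply ts_ext
  apply subset_antisymm
  · rw [hft]
    intro m hm
    simp only [Set.mem_iUnion] at hm
    obtain ⟨n, hn, hm⟩ := hm
    obtain ⟨i, hi⟩ := Set.mem_iUnion.1 hn
    have h1 : (genSub A {n}).carrier ⊆ (c^[i] N).carrier :=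
      genSub_le A (by simpa using hi)
    refine Set.mem_iUnion.2 ⟨i + 1, ?_⟩
    show m ∈ (c^[i + 1] N).carrier
    rw [Function.iterate_succ_apply']
    exact hord _ _ h1 hm
  · exact hext _

lemma cInfty_of_fixed (hext : Extensive A c) (hord : OrderPreserving A c)
    {N : ThickSubmodule A} (hN : c N = N) : cInfty A c hext N = N :=
  ts_ext A (subset_antisymm (cInfty_le_fixed A c hext hord hN subset_rfl)
    (le_cInfty A c hext N))

lemma key_finite (hord : OrderPreserving A c) (hft : FiniteType A c)
    (N : ThickSubmodule A) (i : ℕ) :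
    ∀ (m : M) (N' : ThickSubmodule A),
      m ∈ (c^[i] (genSub A (N.carrier ∪ N'.carrier))).carrier →
      ∃ s : Finset M, ↑s ⊆ N'.carrier ∧ ∀ N'' : ThickSubmodule A, ↑s ⊆ N''.carrier →
        m ∈ (c^[i] (genSub A (N.carrier ∪ N''.carrier))).carrier := by
  classical
  induction i with
  | zero =>
    intro m N' hm
    simp only [Function.iterate_zero, id_eq] at hm ⊢
    obtain ⟨s₀, hs₀X, hms₀⟩ := mem_genSub_finite A _ m hm
    refine ⟨s₀.filter (· ∈ N'.carrier), ?_, ?_⟩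
    · intro x hx
      simp only [Finset.coe_filter, Set.mem_setOf_eq] at hx
      exact hx.2
    · intro N'' hN''
      have hsub : (↑s₀ : Set M) ⊆ N.carrier ∪ N''.carrier := by
        intro x hx
        rcases hs₀X hx with h | h
        · exact Or.inl h
        · refine Or.inr (hN'' ?_)
          simp only [Finset.coe_filter, Set.mem_setOf_eq]
          exact ⟨hx, h⟩
      exact genSub_le A (hsub.trans (subset_genSub A _)) hms₀
  | succ i ih =>
    intro m N' hm
    rw [Function.iterate_succ_apply', hft] at hm
    simp only [Set.mem_iUnion] at hm
    obtain ⟨n, hn, hmn⟩ := hm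
    obtain ⟨s, hsN', hs⟩ := ih n N' hn
    refine ⟨s, hsN', fun N'' hN'' => ?_⟩
    rw [Function.iterate_succ_apply', hft]
    simp only [Set.mem_iUnion]
    exact ⟨n, hs N'' hN'', hmn⟩

lemma U_open (m : M) : IsOpen (U A m) :=
  TopologicalSpace.GenerateOpen.basic _ ⟨m, rfl⟩

lemma plus_open (hext : Extensive A c) (hord : OrderPreserving A c) (hft : FiniteType A c)
    (N : ThickSubmodule A) (m : M) :
    IsOpen {N' : ThickSubmodule A |
      m ∈ (cInfty A c hext (genSub A (N.carrier ∪ N'.carrier))).carrier} := by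
  rw [isOpen_iff_forall_mem_open]
  intro N' hN'
  obtain ⟨i, hi⟩ := Set.mem_iUnion.1 hN'
  obtain ⟨s, hsN', hs⟩ := key_finite A c hord hft N i m N' hi
  refine ⟨⋂ n ∈ s, U A n, ?_, ?_, ?_⟩
  · intro N'' hN''
    simp only [Set.mem_iInter] at hN''
    have hsub : (↑s : Set M) ⊆ N''.carrier := fun x hx => hN'' x (Finset.mem_coe.1 hx)
    exact Set.mem_iUnion.2 ⟨i, hs N'' hsub⟩
  · exact isOpen_biInter_finset fun n _ => U_open A n
  · simp only [Set.mem_iInter]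
    intro n hn
    exact hsN' (Finset.mem_coe.2 hn)

lemma genSub_genSub_union (X Y : Set M) :
    genSub A ((genSub A X).carrier ∪ Y) = genSub A (X ∪ Y) := by
  apply ts_ext
  apply subset_antisymm
  · apply genSub_le
    apply Set.union_subset
    · exact genSub_mono A Set.subset_union_left
    · exact Set.subset_union_right.trans (subset_genSub A _)
  · exact genSub_mono A (Set.union_subset_union_left Y (subset_genSub A X))

lemma cInfty_genSub_cInfty_left (hext : Extensive A c) (hord : OrderPreserving A c)
    (hft : FiniteType A c) (L N₃ : ThickSubmodule A) :
    cInfty A c hext (genSub A ((cInfty A c hext L).carrier ∪ N₃.carrier))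
      = cInfty A c hext (genSub A (L.carrier ∪ N₃.carrier)) := by
  apply ts_ext
  apply subset_antisymm
  · apply cInfty_le_fixed A c hext hord (c_cInfty A c hext hord hft _)
    apply genSub_le
    apply Set.union_subset
    · exact (cInfty_mono A c hext hord
        ((Set.subset_union_left).trans (subset_genSub A _)))
    · exact ((Set.subset_union_right).trans (subset_genSub A _)).trans
        (le_cInfty A c hext _)
  · exact cInfty_mono A c hext hord
      (genSub_mono A (Set.union_subset_union_left _ (le_cInfty A c hext L)))

end Closure

/-- Theorem 3.4: for each `N ∈ SMod^c(M)` the map `N' ↦ c^∞(N + N')` is continuous on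
`SMod^c(M)`; consequently the operation `(N, N') ↦ c^∞(N + N')` (which is well defined on
`SMod^c(M)`) makes the spectral space `SMod^c(M)` a topological monoid.  Here `N + N'`
is the smallest thick `K`-submodule containing `N` and `N'`, namely
`genSub A (N.carrier ∪ N'.carrier)`, and `c^∞(L) = ⋃_{i ≥ 0} c^i(L)`. -/
theorem statement17 (c : ThickSubmodule A → ThickSubmodule A)
    (hext : Extensive A c) (hord : OrderPreserving A c) (hft : FiniteType A c) :
    (∃ mul : {N : ThickSubmodule A // c N = N} → {N : ThickSubmodule A // c N = N} →
        {N : ThickSubmodule A // c N = N},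
      ∀ N N' : {N : ThickSubmodule A // c N = N},
        ((mul N N').1).carrier =
          ⋃ i : ℕ, (c^[i] (genSub A (N.1.carrier ∪ N'.1.carrier))).carrier) ∧
    (∀ mul : {N : ThickSubmodule A // c N = N} → {N : ThickSubmodule A // c N = N} →
        {N : ThickSubmodule A // c N = N},
      (∀ N N' : {N : ThickSubmodule A // c N = N},
        ((mul N N').1).carrier =
          ⋃ i : ℕ, (c^[i] (genSub A (N.1.carrier ∪ N'.1.carrier))).carrier) →
      (∀ N : {N : ThickSubmodule A // c N = N}, Continuous fun N' => mul N N') ∧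
      (∀ N₁ N₂ N₃ : {N : ThickSubmodule A // c N = N},
        mul (mul N₁ N₂) N₃ = mul N₁ (mul N₂ N₃)) ∧
      (∃ e : {N : ThickSubmodule A // c N = N},
        ∀ N : {N : ThickSubmodule A // c N = N}, mul e N = N ∧ mul N e = N)) := by
  classical
  let mul0 : {N : ThickSubmodule A // c N = N} → {N : ThickSubmodule A // c N = N} →
      {N : ThickSubmodule A // c N = N} :=
    fun N N' => ⟨cInfty A c hext (genSub A (N.1.carrier ∪ N'.1.carrier)),
      c_cInfty A c hext hord hft _⟩
  have hcar : ∀ N N' : {N : ThickSubmodule A // c N = N},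
      ((mul0 N N').1).carrier =
        ⋃ i : ℕ, (c^[i] (genSub A (N.1.carrier ∪ N'.1.carrier))).carrier :=
    fun _ _ => rfl
  refine ⟨⟨mul0, hcar⟩, ?_⟩
  intro mul hmul
  have hmeq : mul = mul0 := by
    funext N N'
    apply Subtype.ext
    apply ts_ext
    rw [hmul N N']
    exact (hcar N N').symm
  subst hmeq
  refine ⟨?_, ?_, ?_⟩
  · -- continuity
    intro N
    apply continuous_induced_rng.2
    rw [continuous_generateFrom_iff]
    rintro s ⟨m, rfl⟩
    have hopen := plus_open A c hext hord hft N.1 m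
    have heq : ((Subtype.val ∘ fun N' : {N : ThickSubmodule A // c N = N} => mul0 N N')
        ⁻¹' (U A m))
        = Subtype.val ⁻¹' {N' : ThickSubmodule A |
            m ∈ (cInfty A c hext (genSub A (N.1.carrier ∪ N'.carrier))).carrier} := rfl
    rw [heq]
    exact hopen.preimage continuous_subtype_val
  · -- associativity
    intro N₁ N₂ N₃
    apply Subtype.ext
    show cInfty A c hext (genSub A ((mul0 N₁ N₂).1.carrier ∪ N₃.1.carrier))
        = cInfty A c hext (genSub A (N₁.1.carrier ∪ (mul0 N₂ N₃).1.carrier))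
    have h1 : cInfty A c hext (genSub A ((mul0 N₁ N₂).1.carrier ∪ N₃.1.carrier))
        = cInfty A c hext (genSub A ((N₁.1.carrier ∪ N₂.1.carrier) ∪ N₃.1.carrier)) := by
      rw [show (mul0 N₁ N₂).1 =
          cInfty A c hext (genSub A (N₁.1.carrier ∪ N₂.1.carrier)) from rfl,
        cInfty_genSub_cInfty_left A c hext hord hft, genSub_genSub_union]
    have h2 : cInfty A c hext (genSub A (N₁.1.carrier ∪ (mul0 N₂ N₃).1.carrier))
        = cInfty A c hext (genSub A (N₁.1.carrier ∪ (N₂.1.carrier ∪ N₃.1.carrier))) := by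
      rw [show (mul0 N₂ N₃).1 =
          cInfty A c hext (genSub A (N₂.1.carrier ∪ N₃.1.carrier)) from rfl,
        Set.union_comm N₁.1.carrier, cInfty_genSub_cInfty_left A c hext hord hft,
        genSub_genSub_union, Set.union_comm _ N₁.1.carrier]
    rw [h1, h2, Set.union_assoc]
  · -- unit
    refine ⟨⟨cInfty A c hext (genSub A ∅), c_cInfty A c hext hord hft _⟩, fun N => ?_⟩
    have hE : (cInfty A c hext (genSub A (∅ : Set M))).carrier ⊆ N.1.carrier :=
      cInfty_le_fixed A c hext hord N.2 (genSub_le A (Set.empty_subset _))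
    constructor
    · apply Subtype.ext
      show cInfty A c hext (genSub A
          ((cInfty A c hext (genSub A ∅)).carrier ∪ N.1.carrier)) = N.1
      have hgen : genSub A ((cInfty A c hext (genSub A (∅ : Set M))).carrier
          ∪ N.1.carrier) = N.1 :=
        ts_ext A (subset_antisymm (genSub_le A (Set.union_subset hE subset_rfl))
          (Set.subset_union_right.trans (subset_genSub A _)))
      rw [hgen]
      exact cInfty_of_fixed A c hext hord N.2
    · apply Subtype.ext
      show cInfty A c hext (genSub A
          (N.1.carrier ∪ (cInfty A c hext (genSub A ∅)).carrier)) = N.1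
      have hgen : genSub A (N.1.carrier
          ∪ (cInfty A c hext (genSub A (∅ : Set M))).carrier) = N.1 :=
        ts_ext A (subset_antisymm (genSub_le A (Set.union_subset subset_rfl hE))
          (Set.subset_union_left.trans (subset_genSub A _)))
      rw [hgen]
      exact cInfty_of_fixed A c hext hord N.2
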